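/- Let BP denote the Boolean-to-c-free Bercovici-Pata bijection on pairs of compactly supported distributions, characterized by R_{BP(ν)} = B_ν and ᶜR_{BP(μ,ν)} = B_μ. Then for pairs with second coordinates of nonzero mean, ᶜT_{BP(μ,ν)}(z) = ᶜT_{(μ,ν)}(z/(1-z)) for z in a neighborhood of 0. -/

import Mathlib

open MeasureTheory Topology Filter

/-- `M_σ(z) = ∫ (1-tz)⁻¹ dσ(t)`. -/
noncomputable def momGen (σ : Measure ℝ) (z : ℂ) : ℂ :=
  ∫ t : ℝ, ((1 : ℂ) - (t : ℂ) * z)⁻¹ ∂σ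

/-- `M̃_σ = M_σ - 1`. -/
noncomputable def momGenT (σ : Measure ℝ) (z : ℂ) : ℂ := momGen σ z - 1

/-- Boolean transform `B_σ(z) = 1 - M_σ(z)⁻¹` (i.e. `M_σ - 1 = B_σ·M_σ`). -/
noncomputable def boolT (σ : Measure ℝ) (z : ℂ) : ℂ := 1 - (momGen σ z)⁻¹

/-- `R`, `Rinv`, `cR` are the free R-transform of `ν` (with its local compositional inverse)
and the c-free R-transform of the pair `(μ,ν)`, as analytic germs at `0`. -/
def TransformData (μ ν : Measure ℝ) (R Rinv cR : ℂ → ℂ) : Prop :=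
  ∃ δ : ℝ, 0 < δ ∧ ∀ z : ℂ, ‖z‖ < δ →
    momGenT ν z = R (z + z * momGenT ν z) ∧
    Rinv (R z) = z ∧ R (Rinv z) = z ∧
    (momGen μ z - 1) * momGen ν z = momGen μ z * cR (z * momGen ν z)

lemma momGen_zero (σ : Measure ℝ) [IsProbabilityMeasure σ] : momGen σ 0 = 1 := by
  simp [momGen]

lemma ae_abs_le_of_support {σ : Measure ℝ} {Rb : ℝ} (h : σ (Set.Icc (-Rb) Rb)ᶜ = 0) :
    ∀ᵐ t ∂σ, |t| ≤ max Rb 1 := by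
  have hsub : (Set.Icc (-(max Rb 1)) (max Rb 1))ᶜ ⊆ (Set.Icc (-Rb) Rb)ᶜ :=
    Set.compl_subset_compl.2 (Set.Icc_subset_Icc (by simp [neg_le_neg, le_max_left])
      (le_max_left _ _))
  have h0 : σ (Set.Icc (-(max Rb 1)) (max Rb 1))ᶜ = 0 := measure_mono_null hsub h
  rw [ae_iff]
  refine measure_mono_null ?_ h0
  intro t ht
  simp only [Set.mem_compl_iff, Set.mem_Icc]
  rw [Set.mem_setOf_eq, abs_le] at ht
  exact ht

lemma momGen_hasDerivAt {σ : Measure ℝ} [IsProbabilityMeasure σ] {C : ℝ} (hC : 1 ≤ C)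
    (hae : ∀ᵐ t ∂σ, |t| ≤ C) {x₀ : ℂ} (hx : ‖x₀‖ < (2 * C)⁻¹) :
    HasDerivAt (momGen σ) (∫ t : ℝ, (t : ℂ) * (((1 : ℂ) - (t : ℂ) * x₀)⁻¹) ^ 2 ∂σ) x₀ := by
  have hC0 : (0 : ℝ) < C := lt_of_lt_of_le one_pos hC
  set ε : ℝ := (2 * C)⁻¹ - ‖x₀‖ with hε
  have hεpos : 0 < ε := by rw [hε]; linarith
  -- key norm bound
  have hkey : ∀ t : ℝ, |t| ≤ C → ∀ x ∈ Metric.ball x₀ ε,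
      (1 / 2 : ℝ) ≤ ‖(1 : ℂ) - (t : ℂ) * x‖ := by
    intro t ht x hxball
    have hxn : ‖x‖ < (2 * C)⁻¹ := by
      have := mem_ball_iff_norm.1 hxball
      calc ‖x‖ = ‖x - x₀ + x₀‖ := by ring_nf
        _ ≤ ‖x - x₀‖ + ‖x₀‖ := norm_add_le _ _
        _ < ε + ‖x₀‖ := by linarith
        _ = (2 * C)⁻¹ := by rw [hε]; ring
    have htx : ‖(t : ℂ) * x‖ ≤ 1 / 2 := by
      rw [norm_mul, Complex.norm_real, Real.norm_eq_abs]
      calc |t| * ‖x‖ ≤ C * (2 * C)⁻¹ :=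
            mul_le_mul ht hxn.le (norm_nonneg _) hC0.le
        _ = 1 / 2 := by field_simp
    have := norm_sub_norm_le (1 : ℂ) ((t : ℂ) * x)
    simp only [norm_one] at this
    linarith
  have hmeas : ∀ x : ℂ, AEStronglyMeasurable (fun t : ℝ => ((1 : ℂ) - (t : ℂ) * x)⁻¹) σ :=
    fun x => (((Complex.measurable_ofReal.mul_const x).const_sub 1).inv).aestronglyMeasurable
  have h := hasDerivAt_integral_of_dominated_loc_of_deriv_le (μ := σ)
      (F := fun (x : ℂ) (t : ℝ) => ((1 : ℂ) - (t : ℂ) * x)⁻¹)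
      (F' := fun (x : ℂ) (t : ℝ) => (t : ℂ) * (((1 : ℂ) - (t : ℂ) * x)⁻¹) ^ 2)
      (x₀ := x₀) (bound := fun _ => 4 * C) (Metric.ball_mem_nhds x₀ hεpos)
      (Filter.Eventually.of_forall fun x => hmeas x)
      ?_ ?_ ?_ (integrable_const _) ?_
  · exact h.2
  · -- integrability of F x₀
    refine Integrable.mono' (integrable_const (2 : ℝ)) (hmeas x₀) ?_
    filter_upwards [hae] with t ht
    have hk := hkey t ht x₀ (Metric.mem_ball_self hεpos)
    rw [norm_inv]
    rw [show (2 : ℝ) = (1 / 2 : ℝ)⁻¹ by norm_num]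
    exact inv_anti₀ (by norm_num) hk
  · exact (Complex.measurable_ofReal.mul
      (((Complex.measurable_ofReal.mul_const x₀).const_sub 1).inv.pow_const 2)).aestronglyMeasurable
  · -- bound
    filter_upwards [hae] with t ht x hxball
    have hk := hkey t ht x hxball
    rw [norm_mul, norm_pow, norm_inv, Complex.norm_real, Real.norm_eq_abs]
    have h2 : ‖(1 : ℂ) - (t : ℂ) * x‖⁻¹ ≤ 2 := by
      rw [show (2 : ℝ) = (1 / 2 : ℝ)⁻¹ by norm_num]
      exact inv_anti₀ (by norm_num) hk
    have h2n : (0 : ℝ) ≤ ‖(1 : ℂ) - (t : ℂ) * x‖⁻¹ := inv_nonneg.2 (norm_nonneg _)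
    have h3 : ‖(1 : ℂ) - (t : ℂ) * x‖⁻¹ ^ 2 ≤ 2 ^ 2 := pow_le_pow_left₀ h2n h2 2
    calc |t| * ‖(1 : ℂ) - (t : ℂ) * x‖⁻¹ ^ 2 ≤ C * 2 ^ 2 :=
          mul_le_mul ht h3 (by positivity) hC0.le
      _ = 4 * C := by ring
  · -- differentiability
    filter_upwards [hae] with t ht x hxball
    have hk := hkey t ht x hxball
    have hne : (1 : ℂ) - (t : ℂ) * x ≠ 0 := by
      intro h0; rw [h0] at hk; simp at hk; linarith
    have h1 : HasDerivAt (fun y : ℂ => (1 : ℂ) - (t : ℂ) * y) (-(t : ℂ)) x := by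
      simpa using ((hasDerivAt_id x).const_mul (t : ℂ)).const_sub (1 : ℂ)
    have h2 := h1.inv hne
    have h3 : HasDerivAt (fun y : ℂ => ((1 : ℂ) - (t : ℂ) * y)⁻¹) ((t : ℂ) * (((1 : ℂ) - (t : ℂ) * x)⁻¹) ^ 2) x := by
      rw [neg_neg, div_eq_mul_inv, ← inv_pow] at h2
      exact h2
    exact h3

lemma momGen_analyticAt {σ : Measure ℝ} [IsProbabilityMeasure σ] {C : ℝ} (hC : 1 ≤ C)
    (hae : ∀ᵐ t ∂σ, |t| ≤ C) : AnalyticAt ℂ (momGen σ) 0 := by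
  have hC0 : (0 : ℝ) < C := lt_of_lt_of_le one_pos hC
  have hd : DifferentiableOn ℂ (momGen σ) (Metric.ball 0 (2 * C)⁻¹) := fun x hxm =>
    ((momGen_hasDerivAt hC hae (by simpa using mem_ball_zero_iff.1 hxm)).differentiableAt).differentiableWithinAt
  exact hd.analyticAt (Metric.ball_mem_nhds 0 (inv_pos.2 (by linarith)))

lemma momGen_hasDerivAt_zero {σ : Measure ℝ} [IsProbabilityMeasure σ] {C : ℝ} (hC : 1 ≤ C)
    (hae : ∀ᵐ t ∂σ, |t| ≤ C) :
    HasDerivAt (momGen σ) (((∫ t : ℝ, t ∂σ : ℝ) : ℂ)) 0 := by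
  have hC0 : (0 : ℝ) < C := lt_of_lt_of_le one_pos hC
  have h := momGen_hasDerivAt hC hae (x₀ := 0)
    (by rw [norm_zero]; exact inv_pos.2 (by linarith))
  simp only [mul_zero, sub_zero, inv_one, one_pow, mul_one] at h
  have heq : (∫ t : ℝ, (t : ℂ) ∂σ) = (((∫ t : ℝ, t ∂σ : ℝ)) : ℂ) := integral_ofReal
  rwa [heq] at h

/-- If `(μ',ν') = BP(μ,ν)` is the Boolean-to-c-free Bercovici–Pata image of `(μ,ν)`, i.e.
`ᶜR_{μ',ν'} = B_μ` and `R_{ν'} = B_ν` as germs at `0`, then the c-free T-transforms satisfy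
`ᶜT_{BP(μ,ν)}(z) = ᶜT_{(μ,ν)}(z/(1-z))` near `0`. -/
theorem cfree_BP_T_transform (μ ν μ' ν' : Measure ℝ)
    [IsProbabilityMeasure μ] [IsProbabilityMeasure ν]
    [IsProbabilityMeasure μ'] [IsProbabilityMeasure ν']
    (hμsupp : ∃ R : ℝ, μ (Set.Icc (-R) R)ᶜ = 0)
    (hνsupp : ∃ R : ℝ, ν (Set.Icc (-R) R)ᶜ = 0)
    (hμ'supp : ∃ R : ℝ, μ' (Set.Icc (-R) R)ᶜ = 0)
    (hν'supp : ∃ R : ℝ, ν' (Set.Icc (-R) R)ᶜ = 0)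
    (hmean : (∫ t : ℝ, t ∂ν) ≠ 0) (hmean' : (∫ t : ℝ, t ∂ν') ≠ 0)
    (R Rinv cR R' R'inv cR' : ℂ → ℂ)
    (hT : TransformData μ ν R Rinv cR)
    (hT' : TransformData μ' ν' R' R'inv cR')
    (hBP : ∃ δ : ℝ, 0 < δ ∧ ∀ z : ℂ, ‖z‖ < δ → cR' z = boolT μ z ∧ R' z = boolT ν z) :
    ∃ ε : ℝ, 0 < ε ∧ ∀ z : ℂ, ‖z‖ < ε →
      cR' (R'inv z) / R'inv z = cR (Rinv (z / (1 - z))) / Rinv (z / (1 - z)) := by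
  obtain ⟨δ₁, hδ₁, h1⟩ := hT
  obtain ⟨δ₂, hδ₂, h2⟩ := hT'
  obtain ⟨δ₃, hδ₃, h3⟩ := hBP
  obtain ⟨Rμ, hμs⟩ := hμsupp
  obtain ⟨Rν, hνs⟩ := hνsupp
  have haeμ := ae_abs_le_of_support hμs
  have haeν := ae_abs_le_of_support hνs
  have hCμ : (1 : ℝ) ≤ max Rμ 1 := le_max_right _ _
  have hCν : (1 : ℝ) ≤ max Rν 1 := le_max_right _ _
  have hMν0 : momGen ν 0 = 1 := momGen_zero ν
  have hDν := momGen_hasDerivAt_zero hCν haeν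
  have hDμ := momGen_hasDerivAt_zero hCμ haeμ
  have hm : ((∫ t : ℝ, t ∂ν : ℝ) : ℂ) ≠ 0 := Complex.ofReal_ne_zero.2 hmean
  have hAν : AnalyticAt ℂ (momGen ν) 0 := momGen_analyticAt hCν haeν
  have hneq1 : momGen ν 0 ≠ 0 := by rw [hMν0]; exact one_ne_zero
  have hAB : AnalyticAt ℂ (boolT ν) 0 := by
    have : AnalyticAt ℂ (fun z => 1 - (momGen ν z)⁻¹) 0 :=
      analyticAt_const.sub (hAν.inv hneq1)
    exact this
  have hDB : HasDerivAt (boolT ν) ((∫ t : ℝ, t ∂ν : ℝ) : ℂ) 0 := by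
    have h := (hDν.inv hneq1).const_sub (1 : ℂ)
    exact (by simpa [hMν0] using h : HasDerivAt (fun z => 1 - (momGen ν z)⁻¹) ((∫ t : ℝ, t ∂ν : ℝ) : ℂ) 0)
  have hSB : HasStrictDerivAt (boolT ν) ((∫ t : ℝ, t ∂ν : ℝ) : ℂ) 0 := by
    obtain ⟨p, hp⟩ := hAB
    have hs := hp.hasStrictDerivAt
    rwa [hs.hasDerivAt.unique hDB] at hs
  have hB0 : boolT ν 0 = 0 := by simp [boolT, hMν0]
  have hmap : Filter.map (boolT ν) (𝓝 0) = 𝓝 (0 : ℂ) := by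
    have := hSB.map_nhds_eq hm
    rwa [hB0] at this
  -- continuity bounds
  have hcν : ∀ᶠ u in 𝓝 (0 : ℂ), ‖momGen ν u - 1‖ < 1 / 2 := by
    have hc := hDν.continuousAt
    rw [ContinuousAt, hMν0] at hc
    have := hc (Metric.ball_mem_nhds (1 : ℂ) (by norm_num : (0:ℝ) < 1/2))
    filter_upwards [this] with u hu
    simpa [Metric.mem_ball, dist_eq_norm] using hu
  have hcμ : ∀ᶠ u in 𝓝 (0 : ℂ), ‖momGen μ u - 1‖ < 1 / 2 := by
    have hc := hDμ.continuousAt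
    rw [ContinuousAt, momGen_zero μ] at hc
    have := hc (Metric.ball_mem_nhds (1 : ℂ) (by norm_num : (0:ℝ) < 1/2))
    filter_upwards [this] with u hu
    simpa [Metric.mem_ball, dist_eq_norm] using hu
  obtain ⟨δ₄, hδ₄, hc4⟩ := Metric.eventually_nhds_iff_ball.1 hcν
  obtain ⟨δ₅, hδ₅, hc5⟩ := Metric.eventually_nhds_iff_ball.1 hcμ
  set δ₀ : ℝ := min (min (min (2 / 3 * δ₁) δ₂) δ₃) (min δ₄ δ₅) with hδ₀def
  have hδ₀ : 0 < δ₀ :=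
    lt_min (lt_min (lt_min (by linarith) hδ₂) hδ₃) (lt_min hδ₄ hδ₅)
  have himg : boolT ν '' Metric.ball 0 δ₀ ∈ 𝓝 (0 : ℂ) := by
    have := Filter.image_mem_map (m := boolT ν) (Metric.ball_mem_nhds (0 : ℂ) hδ₀)
    rwa [hmap] at this
  obtain ⟨ε, hε, hball⟩ := Metric.mem_nhds_iff.1 himg
  refine ⟨ε, hε, fun z hz => ?_⟩
  obtain ⟨u, hu, huz⟩ := hball (mem_ball_zero_iff.2 hz)
  have hun : ‖u‖ < δ₀ := mem_ball_zero_iff.1 hu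
  have hu1 : ‖u‖ < δ₁ := by
    have : δ₀ ≤ 2 / 3 * δ₁ := le_trans (min_le_left _ _) (le_trans (min_le_left _ _) (min_le_left _ _))
    linarith
  have hu23 : ‖u‖ < 2 / 3 * δ₁ := by
    have : δ₀ ≤ 2 / 3 * δ₁ := le_trans (min_le_left _ _) (le_trans (min_le_left _ _) (min_le_left _ _))
    linarith
  have hu2 : ‖u‖ < δ₂ := by
    have : δ₀ ≤ δ₂ := le_trans (min_le_left _ _) (le_trans (min_le_left _ _) (min_le_right _ _))
    linarith
  have hu3 : ‖u‖ < δ₃ := by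
    have : δ₀ ≤ δ₃ := le_trans (min_le_left _ _) (min_le_right _ _)
    linarith
  have hu4 : u ∈ Metric.ball (0 : ℂ) δ₄ := by
    have : δ₀ ≤ δ₄ := le_trans (min_le_right _ _) (min_le_left _ _)
    exact mem_ball_zero_iff.2 (by linarith)
  have hu5 : u ∈ Metric.ball (0 : ℂ) δ₅ := by
    have : δ₀ ≤ δ₅ := le_trans (min_le_right _ _) (min_le_right _ _)
    exact mem_ball_zero_iff.2 (by linarith)
  have hMν : ‖momGen ν u - 1‖ < 1 / 2 := hc4 u hu4
  have hMμ : ‖momGen μ u - 1‖ < 1 / 2 := hc5 u hu5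
  have hMνne : momGen ν u ≠ 0 := by
    intro h0; rw [h0] at hMν; norm_num at hMν
  have hMμne : momGen μ u ≠ 0 := by
    intro h0; rw [h0] at hMμ; norm_num at hMμ
  by_cases hu0 : u = 0
  · -- degenerate case z = 0
    subst hu0
    have hz0 : z = 0 := by rw [← huz, hB0]
    subst hz0
    have h20 := h2 0 (by simpa using hδ₂)
    have hR'0 : R' 0 = 0 := by
      have := h20.1
      simp [momGenT, momGen_zero ν'] at this
      exact this.symm
    have hR'inv0 : R'inv 0 = 0 := by
      have := h20.2.1
      rwa [hR'0] at this
    have h10 := h1 0 (by simpa using hδ₁)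
    have hR0 : R 0 = 0 := by
      have := h10.1
      simp [momGenT, hMν0] at this
      exact this.symm
    have hRinv0 : Rinv 0 = 0 := by
      have := h10.2.1
      rwa [hR0] at this
    rw [show (0 : ℂ) / (1 - 0) = 0 by norm_num, hR'inv0, hRinv0]
    simp
  · -- main case
    have hz1 : (1 : ℂ) - z = (momGen ν u)⁻¹ := by
      rw [← huz]; simp [boolT]
    have hw : z / (1 - z) = momGenT ν u := by
      rw [hz1, ← huz]
      unfold boolT momGenT
      field_simp
    have hR'u : R' u = z := by rw [(h3 u hu3).2, huz]
    have hR'invz : R'inv z = u := by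
      have := (h2 u hu2).2.1
      rwa [hR'u] at this
    have hL : cR' (R'inv z) / R'inv z = boolT μ u / u := by
      rw [hR'invz, (h3 u hu3).1]
    have hMνnorm : ‖momGen ν u‖ < 3 / 2 := by
      have := norm_add_le (momGen ν u - 1) 1
      simp only [sub_add_cancel, norm_one] at this
      linarith
    have hv : ‖u * momGen ν u‖ < δ₁ := by
      rw [norm_mul]
      have h0u : (0 : ℝ) ≤ ‖u‖ := norm_nonneg u
      nlinarith [norm_nonneg (momGen ν u)]
    have hRid : momGenT ν u = R (u * momGen ν u) := by
      have := (h1 u hu1).1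
      convert this using 2
      unfold momGenT
      ring
    have hRinvw : Rinv (z / (1 - z)) = u * momGen ν u := by
      rw [hw, hRid, (h1 (u * momGen ν u) hv).2.1]
    have hcid := (h1 u hu1).2.2.2
    have hcR : cR (u * momGen ν u) = (momGen μ u - 1) * momGen ν u / momGen μ u := by
      rw [eq_div_iff hMμne]
      linear_combination hcid.symm
    rw [hL, hRinvw, hcR]
    unfold boolT
    field_simp
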